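/- Let α > 1, k > 0, and let φ : [0,∞) → [0,∞) be twice differentiable, satisfying φ'(s) = (1 + α²k²φ(s)^{2α-2})^{-1/2}, with lim_{s→∞} s^{-1/α} φ(s) = k^{-1/α}. Then lim_{s→∞} s^{(2α-1)/α} φ''(s) = -((α-1)/α²) k^{-1/α}. -/

import Mathlib

open Real Filter Set

theorem stmt3 (α k : ℝ) (hα : 1 < α) (hk : 0 < k) (φ : ℝ → ℝ)
    (hφmap : ∀ s ≥ 0, 0 ≤ φ s)
    (hdiff : ContDiff ℝ 2 φ)
    (hODE : ∀ s ≥ 0, deriv φ s = (1 + α ^ 2 * k ^ 2 * (φ s) ^ (2 * α - 2)) ^ (-(1 / 2 : ℝ)))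
    (hasym : Tendsto (fun s : ℝ => s ^ (-(1 / α)) * φ s) atTop (nhds (k ^ (-(1 / α))))) :
    Tendsto (fun s : ℝ => s ^ ((2 * α - 1) / α) * deriv (deriv φ) s) atTop
      (nhds (-((α - 1) / α ^ 2) * k ^ (-(1 / α)))) := by
  have hα0 : (0:ℝ) < α := by linarith
  set L : ℝ := k ^ (-(1/α)) with hLdef
  have hL : 0 < L := rpow_pos_of_pos hk _
  -- derivative formula
  have hD : ∀ s : ℝ, 0 < s → 0 < φ s →
      deriv (deriv φ) s = -(α^2*k^2*(α-1)) * (φ s)^(2*α-3) *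
        (1 + α^2*k^2*(φ s)^(2*α-2)) ^ (-(2:ℝ)) := by
    intro s hs hφs
    set A : ℝ := α^2*k^2*(φ s)^(2*α-2) with hAdef
    have hA0 : 0 ≤ A := by positivity
    have hA1 : (0:ℝ) < 1 + A := by linarith
    have heq : deriv φ =ᶠ[nhds s]
        fun x => (1 + α^2*k^2*(φ x)^(2*α-2)) ^ (-(1/2:ℝ)) := by
      filter_upwards [isOpen_Ioi.mem_nhds (show s ∈ Ioi (0:ℝ) from hs)] with x hx
      exact hODE x (le_of_lt hx)
    rw [heq.deriv_eq]
    have hφd : HasDerivAt φ (deriv φ s) s :=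
      ((hdiff.differentiable (by norm_num)) s).hasDerivAt
    have h1 : HasDerivAt (fun x => (φ x) ^ (2*α-2))
        ((2*α-2) * (φ s)^(2*α-2-1) * deriv φ s) s :=
      (Real.hasDerivAt_rpow_const (p := 2*α-2) (Or.inl hφs.ne')).comp s hφd
    have h2 : HasDerivAt (fun x => 1 + α^2*k^2*(φ x)^(2*α-2))
        (α^2*k^2 * ((2*α-2) * (φ s)^(2*α-2-1) * deriv φ s)) s :=
      (h1.const_mul _).const_add 1
    have h3 : HasDerivAt (fun y : ℝ => y ^ (-(1/2:ℝ)))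
        ((-(1/2:ℝ)) * (1+A) ^ (-(1/2:ℝ)-1)) (1+A) :=
      Real.hasDerivAt_rpow_const (Or.inl hA1.ne')
    have h4 := h3.comp s h2
    have h5 : deriv (fun x => (1 + α^2*k^2*(φ x)^(2*α-2)) ^ (-(1/2:ℝ))) s
        = (-(1/2:ℝ)) * (1+A) ^ (-(1/2:ℝ)-1) *
          (α^2*k^2 * ((2*α-2) * (φ s)^(2*α-2-1) * deriv φ s)) := h4.deriv
    rw [h5, hODE s hs.le]
    have hc : (1+A) ^ (-(1/2:ℝ)-1) * (1+A) ^ (-(1/2:ℝ)) = (1+A) ^ (-(2:ℝ)) := by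
      rw [← Real.rpow_add hA1]; norm_num
    rw [show (2*α-2-1 : ℝ) = 2*α-3 by ring, ← hAdef, ← hc]; ring
  -- eventual positivity
  have hev : ∀ᶠ s in atTop, 0 < s ∧ 0 < φ s ∧ 0 < s ^ (-(1/α)) * φ s := by
    have h1 : ∀ᶠ s in atTop, 0 < s ^ (-(1/α)) * φ s := hasym.eventually (lt_mem_nhds hL)
    filter_upwards [h1, eventually_gt_atTop (0:ℝ)] with s hu hs
    refine ⟨hs, ?_, hu⟩
    have key : (s ^ (-(1/α)) * φ s) * s ^ (1/α) = φ s := by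
      rw [mul_comm (s ^ (-(1/α))) (φ s), mul_assoc, ← Real.rpow_add hs]
      simp
    rw [← key]
    exact mul_pos hu (rpow_pos_of_pos hs _)
  -- the comparison function
  set c : ℝ := (2*α-2)/α with hcdef
  set F : ℝ → ℝ := fun s =>
    -(α^2*k^2*(α-1)) * (s ^ (-(1/α)) * φ s) ^ (2*α-3) *
      (s ^ (-c) + α^2*k^2*(s ^ (-(1/α)) * φ s) ^ (2*α-2)) ^ (-(2:ℝ)) with hFdef
  have hc0 : 0 < c := by
    apply div_pos <;> linarith
  -- eventual equality
  have heqF : (fun s : ℝ => s ^ ((2*α-1)/α) * deriv (deriv φ) s) =ᶠ[atTop] F := by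
    filter_upwards [hev] with s hsev
    obtain ⟨hs, hφs, hu⟩ := hsev
    rw [hD s hs hφs]
    set u : ℝ := s ^ (-(1/α)) * φ s with hudef
    have key1 : φ s = s ^ (1/α) * u := by
      rw [hudef, ← mul_assoc, ← Real.rpow_add hs]; simp
    have key2 : ∀ p : ℝ, (φ s) ^ p = s ^ (p/α) * u ^ p := by
      intro p
      rw [key1, Real.mul_rpow (rpow_nonneg hs.le _) hu.le, ← Real.rpow_mul hs.le,
        show 1/α*p = p/α by ring]
    have key3 : 1 + α^2*k^2*(φ s)^(2*α-2) = s ^ c * (s ^ (-c) + α^2*k^2*u^(2*α-2)) := by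
      rw [key2, mul_add, ← Real.rpow_add hs, add_neg_cancel, Real.rpow_zero,
        hcdef, show (2*α-2)/α = (2*α-2)/α from rfl]
      ring
    set B : ℝ := s ^ (-c) + α^2*k^2*u^(2*α-2) with hBdef
    have hB0 : 0 ≤ B := by positivity
    rw [key2 (2*α-3), key3, Real.mul_rpow (rpow_nonneg hs.le _) hB0,
      ← Real.rpow_mul hs.le]
    have hsone : s^((2*α-1)/α) * (s^((2*α-3)/α) * s^(c*(-2:ℝ))) = 1 := by
      rw [← Real.rpow_add hs, ← Real.rpow_add hs,
        show (2*α-1)/α + ((2*α-3)/α + c*(-2:ℝ)) = 0 by rw [hcdef]; field_simp; ring,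
        Real.rpow_zero]
    calc s^((2*α-1)/α) * (-(α^2*k^2*(α-1)) * (s^((2*α-3)/α) * u^(2*α-3)) *
          (s^(c*(-2:ℝ)) * B^(-(2:ℝ))))
        = (s^((2*α-1)/α) * (s^((2*α-3)/α) * s^(c*(-2:ℝ)))) *
          (-(α^2*k^2*(α-1)) * u^(2*α-3) * B^(-(2:ℝ))) := by ring
      _ = F s := by rw [hsone, hFdef]; ring
  -- limit of F
  have hinnerlim : Tendsto (fun s : ℝ => s ^ (-c) + α^2*k^2*(s ^ (-(1/α)) * φ s)^(2*α-2))
      atTop (nhds (0 + α^2*k^2*L^(2*α-2))) :=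
    (tendsto_rpow_neg_atTop hc0).add ((hasym.rpow_const (Or.inl hL.ne')).const_mul _)
  have hP : (0:ℝ) < 0 + α^2*k^2*L^(2*α-2) := by positivity
  have hFlim : Tendsto F atTop (nhds (-(α^2*k^2*(α-1)) * L^(2*α-3) *
      ((0:ℝ) + α^2*k^2*L^(2*α-2)) ^ (-(2:ℝ)))) :=
    ((hasym.rpow_const (Or.inl hL.ne')).const_mul _).mul
      (hinnerlim.rpow_const (Or.inl hP.ne'))
  have hval : -(α^2*k^2*(α-1)) * L^(2*α-3) *
      ((0:ℝ) + α^2*k^2*L^(2*α-2)) ^ (-(2:ℝ)) = -((α - 1) / α ^ 2) * k ^ (-(1/α)) := by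
    have e1 : L ^ (2*α-3) = k ^ (-(1/α)*(2*α-3)) := by
      rw [hLdef, ← Real.rpow_mul hk.le]
    have ek2 : (k:ℝ)^2 = k ^ ((2:ℝ)) := by
      rw [← Real.rpow_natCast k 2]; norm_num
    have e2 : (0:ℝ) + α^2*k^2*L^(2*α-2) = α^2 * k^(2/α) := by
      rw [zero_add, mul_assoc, hLdef, ← Real.rpow_mul hk.le, ek2, ← Real.rpow_add hk]
      congr 1
      field_simp; congr 1; ring
    have e3 : (α^2 * k^(2/α)) ^ (-(2:ℝ)) = (α^4)⁻¹ * k^((2/α)*(-2:ℝ)) := by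
      rw [Real.mul_rpow (by positivity) (by positivity), ← Real.rpow_mul hk.le]
      congr 1
      rw [Real.rpow_neg (by positivity), show ((2:ℝ)) = ((2:ℕ):ℝ) by norm_num,
        Real.rpow_natCast]
      ring
    have e4 : k^((2:ℝ)) * (k ^ (-(1/α)*(2*α-3)) * k ^ ((2/α)*(-2:ℝ))) = k ^ (-(1/α)) := by
      rw [← Real.rpow_add hk, ← Real.rpow_add hk]
      congr 1
      field_simp; ring
    rw [e1, e2, e3, ek2]
    calc -(α^2*(k^((2:ℝ)))*(α-1)) * k^(-(1/α)*(2*α-3)) * ((α^4)⁻¹ * k^((2/α)*(-2:ℝ)))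
        = -(α-1) * (α^2 * (α^4)⁻¹) *
          (k^((2:ℝ)) * (k^(-(1/α)*(2*α-3)) * k^((2/α)*(-2:ℝ)))) := by ring
      _ = -((α - 1) / α ^ 2) * k ^ (-(1/α)) := by
          rw [e4]; field_simp
  rw [← hval]
  exact hFlim.congr' heqF.symm
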